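/- For fixed 𝒬 ≥ 0, the pseudo potential V₊(r, 𝒬) has exactly one critical point in r on the interval (r₊, ∞), which is a maximum, and V₋(r, 𝒬) has exactly one critical point, which is a minimum. Consequently, for each 𝒬 ≥ 0 there exist exactly two spherical null orbits. -/

import Mathlib

set_option maxHeartbeats 4000000

private lemma quad_of_sqrt (n m c u : ℝ) (hn : n ≠ 0) (hu : u^2 = m^2 - n*c) :
    n * ((m + u)/n)^2 - 2*m*((m + u)/n) + c = 0 := by
  field_simp
  linear_combination hu

private lemma quad_of_sqrt' (n m c u : ℝ) (hn : n ≠ 0) (hu : u^2 = m^2 - n*c) :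
    n * ((m - u)/n)^2 - 2*m*((m - u)/n) + c = 0 := by
  field_simp
  linear_combination hu

private lemma prod_of_sqrt (n m c u : ℝ) (hn : n ≠ 0) (hu : u^2 = m^2 - n*c) :
    n * ((m + u)/n * ((m - u)/n)) = c := by
  field_simp
  linear_combination -hu

private lemma sum_of_sqrt (n m u : ℝ) (hn : n ≠ 0) :
    n * ((m + u)/n + (m - u)/n) = 2*m := by
  field_simp
  ring

private lemma hasDerivAt_congr_fun {F G : ℝ → ℝ} {d x : ℝ} (h : HasDerivAt F d x)
    (he : ∀ r, G r = F r) (d' : ℝ) (hd : d' = d) : HasDerivAt G d' x := by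
  have : G = F := funext he
  rw [this, hd]; exact h

private lemma quartic_key (M a Q rp x E : ℝ) (hM : 0 < M) (ha0 : 0 ≤ a) (haM : a < M)
    (hQ : 0 ≤ Q) (hrp : 0 < rp) (hx : rp < x)
    (hDrp : rp ^ 2 - 2 * M * rp + a ^ 2 = 0)
    (hPx : E^2*x^4 + (E^2*a^2 - (1+Q))*x^2 + 2*M*(a^2*E^2 - 2*a*E + 1 + Q)*x - Q*a^2 = 0)
    (hP'x : 4*E^2*x^3 + 2*(E^2*a^2 - (1+Q))*x + 2*M*(a^2*E^2 - 2*a*E + 1 + Q) = 0) :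
    (∀ z, rp < z → 0 ≤ E^2*z^4 + (E^2*a^2 - (1+Q))*z^2 + 2*M*(a^2*E^2 - 2*a*E + 1 + Q)*z - Q*a^2)
    ∧ (∀ z, rp < z → z ≠ x → 0 < E^2*z^4 + (E^2*a^2 - (1+Q))*z^2 + 2*M*(a^2*E^2 - 2*a*E + 1 + Q)*z - Q*a^2) := by
  have hx0 : 0 < x := hrp.trans hx
  have hfac : ∀ r, E^2*r^4 + (E^2*a^2 - (1+Q))*r^2 + 2*M*(a^2*E^2 - 2*a*E + 1 + Q)*r - Q*a^2
      = (r - x)^2 * (E^2*r^2 + (2*x*E^2)*r + ((E^2*a^2 - (1+Q)) + 3*x^2*E^2)) := by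
    intro r
    linear_combination hPx + (r - x) * hP'x
  have hc : (E^2*a^2 - (1+Q)) + 3*x^2*E^2 ≤ 0 := by
    have h0 := hfac 0
    nlinarith [mul_nonneg hQ (sq_nonneg a), mul_pos hx0 hx0]
  have hqrp : 0 ≤ E^2*rp^2 + (2*x*E^2)*rp + ((E^2*a^2 - (1+Q)) + 3*x^2*E^2) := by
    have h1 : (rp - x)^2 * (E^2*rp^2 + (2*x*E^2)*rp + ((E^2*a^2 - (1+Q)) + 3*x^2*E^2))
        = (E*(rp^2+a^2) - a)^2 := by
      linear_combination (-(a^2*E^2) + 2*a*E - (1+Q)) * hDrp - hfac rp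
    have h2 : 0 < (rp - x)^2 := by nlinarith [mul_pos (sub_pos.mpr hx) (sub_pos.mpr hx)]
    nlinarith [sq_nonneg (E*(rp^2+a^2) - a)]
  have hqz : ∀ z, rp ≤ z → 0 ≤ E^2*z^2 + (2*x*E^2)*z + ((E^2*a^2 - (1+Q)) + 3*x^2*E^2) := by
    intro z hz
    have key : rp*(E^2*z^2 + (2*x*E^2)*z + ((E^2*a^2 - (1+Q)) + 3*x^2*E^2))
        = z*(E^2*rp^2 + (2*x*E^2)*rp + ((E^2*a^2 - (1+Q)) + 3*x^2*E^2))
          + (z - rp)*(-((E^2*a^2 - (1+Q)) + 3*x^2*E^2)) + E^2*rp*z*(z - rp) := by ring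
    have t1 : 0 ≤ z*(E^2*rp^2 + (2*x*E^2)*rp + ((E^2*a^2 - (1+Q)) + 3*x^2*E^2)) :=
      mul_nonneg (by linarith) hqrp
    have t2 : 0 ≤ (z - rp)*(-((E^2*a^2 - (1+Q)) + 3*x^2*E^2)) :=
      mul_nonneg (by linarith) (by linarith)
    have t3 : 0 ≤ E^2*rp*z*(z - rp) :=
      mul_nonneg (mul_nonneg (mul_nonneg (sq_nonneg E) hrp.le) (by linarith)) (by linarith)
    nlinarith [key, t1, t2, t3]
  constructor
  · intro z hz
    rw [hfac z]
    exact mul_nonneg (sq_nonneg _) (hqz z hz.le)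
  · intro z hz hzx
    have hqzpos : 0 < E^2*z^2 + (2*x*E^2)*z + ((E^2*a^2 - (1+Q)) + 3*x^2*E^2) := by
      rcases (hqz z hz.le).lt_or_eq with h | h
      · exact h
      · exfalso
        have hq0 : E^2*z^2 + (2*x*E^2)*z + ((E^2*a^2 - (1+Q)) + 3*x^2*E^2) = 0 := h.symm
        have key : z*(E^2*rp^2 + (2*x*E^2)*rp + ((E^2*a^2 - (1+Q)) + 3*x^2*E^2))
              + (z - rp)*(-((E^2*a^2 - (1+Q)) + 3*x^2*E^2)) + E^2*rp*z*(z - rp) = 0 := by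
          linear_combination rp * hq0
        have t1 : 0 ≤ z*(E^2*rp^2 + (2*x*E^2)*rp + ((E^2*a^2 - (1+Q)) + 3*x^2*E^2)) :=
          mul_nonneg (by linarith) hqrp
        have t2 : 0 ≤ (z - rp)*(-((E^2*a^2 - (1+Q)) + 3*x^2*E^2)) :=
          mul_nonneg (by linarith) (by linarith)
        have t3 : 0 ≤ E^2*rp*z*(z - rp) :=
          mul_nonneg (mul_nonneg (mul_nonneg (sq_nonneg E) hrp.le) (by linarith)) (by linarith)
        have ht3 : E^2*rp*z*(z - rp) = 0 := by linarith
        have ht2 : (z - rp)*(-((E^2*a^2 - (1+Q)) + 3*x^2*E^2)) = 0 := by linarith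
        have hE0 : E^2 = 0 := by
          have hpos : 0 < rp*z*(z - rp) :=
            mul_pos (mul_pos hrp (hrp.trans hz)) (sub_pos.mpr hz)
          by_contra hE
          have hEp : 0 < E^2 := (sq_nonneg E).lt_of_ne (Ne.symm hE)
          nlinarith [ht3]
        have hc0 : (E^2*a^2 - (1+Q)) + 3*x^2*E^2 = 0 := by
          have hzrp : 0 < z - rp := sub_pos.mpr hz
          rcases mul_eq_zero.mp ht2 with h' | h'
          · linarith
          · linarith
        have hQ0 : (1:ℝ) + Q = 0 := by
          linear_combination -hc0 + (a^2 + 3*x^2)*hE0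
        linarith
    have hsq : 0 < (z - x)^2 := by
      rcases lt_or_gt_of_ne hzx with h | h
      · nlinarith
      · nlinarith
    rw [hfac z]
    exact mul_pos hsq hqzpos

private lemma global_max_aux (M a Q rp : ℝ) (hM : 0 < M) (ha0 : 0 ≤ a) (haM : a < M) (hQ : 0 ≤ Q)
    (hrp0 : 0 < rp) (hDrp : rp^2 - 2*M*rp + a^2 = 0)
    (Vp Vm : ℝ → ℝ)
    (hNpos : ∀ r, 0 < r → 0 < r * (r * (r^2 + a^2) + 2*M*a^2))
    (hgap : ∀ r, rp < r → Vm r < Vp r)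
    (hsum : ∀ r, rp < r → (r*(r*(r^2+a^2)+2*M*a^2)) * (Vp r + Vm r) = 4*M*a*r)
    (hprodm : ∀ r, rp < r → (r*(r*(r^2+a^2)+2*M*a^2)) * (Vp r * Vm r)
      = a^2 - (1+Q)*(r^2-2*M*r+a^2))
    (hquadp : ∀ r, rp < r → (r*(r*(r^2+a^2)+2*M*a^2)) * (Vp r)^2 - 4*M*a*r*(Vp r)
      + (a^2 - (1+Q)*(r^2-2*M*r+a^2)) = 0)
    (x : ℝ) (hx : rp < x)
    (hP'x : 4*(Vp x)^2*x^3 + 2*((Vp x)^2*a^2 - (1+Q))*x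
      + 2*M*(a^2*(Vp x)^2 - 2*a*(Vp x) + 1 + Q) = 0) :
    IsMaxOn Vp (Set.Ioi rp) x ∧ (∀ y, rp < y → y ≠ x → Vp y ≠ Vp x) := by
  set E := Vp x with hE
  have hPx : E^2*x^4 + (E^2*a^2 - (1+Q))*x^2 + 2*M*(a^2*E^2 - 2*a*E + 1 + Q)*x - Q*a^2 = 0 := by
    linear_combination hquadp x hx
  have hP'x' : 4*E^2*x^3 + 2*(E^2*a^2 - (1+Q))*x + 2*M*(a^2*E^2 - 2*a*E + 1 + Q) = 0 := by
    linear_combination hP'x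
  obtain ⟨hPz, hPzs⟩ := quartic_key M a Q rp x E hM ha0 haM hQ hrp0 hx hDrp hPx hP'x'
  have hprodid : ∀ z, rp < z → (z*(z*(z^2+a^2)+2*M*a^2)) * ((E - Vp z)*(E - Vm z))
      = E^2*z^4 + (E^2*a^2 - (1+Q))*z^2 + 2*M*(a^2*E^2 - 2*a*E + 1 + Q)*z - Q*a^2 := by
    intro z hz
    linear_combination (-E) * hsum z hz + hprodm z hz
  have hprodnn : ∀ z, rp < z → 0 ≤ (E - Vp z)*(E - Vm z) := by
    intro z hz
    rcases eq_or_ne z x with rfl | hne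
    · have h0 : E - Vp z = 0 := sub_eq_zero_of_eq hE
      rw [h0, zero_mul]
    · exact nonneg_of_mul_nonneg_right (by
        rw [hprodid z hz]; exact hPz z hz) (hNpos z (hrp0.trans hz))
  have hIVT : ∀ y, rp < y → 2*E*(y*(y*(y^2+a^2)+2*M*a^2)) - 4*M*a*y = 0 → False := by
    intro y hyrp hψy
    have hNy := hNpos y (hrp0.trans hyrp)
    have hst : (E - Vp y) + (E - Vm y) = 0 := by
      have hN0 : (y*(y*(y^2+a^2)+2*M*a^2)) * ((E - Vp y) + (E - Vm y)) = 0 := by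
        linear_combination hψy - hsum y hyrp
      exact (mul_eq_zero.mp hN0).resolve_left hNy.ne'
    have hs' : E - Vp y = -(E - Vm y) := by linarith
    have hp := hprodnn y hyrp
    rw [hs'] at hp
    have ht : E - Vm y = 0 := by nlinarith [hp, sq_nonneg (E - Vm y)]
    have := hgap y hyrp
    linarith
  constructor
  · intro z hz
    simp only [Set.mem_Ioi] at hz
    show Vp z ≤ E
    by_contra hcon
    push_neg at hcon
    have hEVm : E ≤ Vm z := by nlinarith [hprodnn z hz]
    have hψx : 0 < 2*E*(x*(x*(x^2+a^2)+2*M*a^2)) - 4*M*a*x := by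
      nlinarith [hsum x hx, mul_pos (hNpos x (hrp0.trans hx)) (sub_pos.mpr (hgap x hx))]
    have hψz : 2*E*(z*(z*(z^2+a^2)+2*M*a^2)) - 4*M*a*z < 0 := by
      nlinarith [hsum z hz, mul_pos (hNpos z (hrp0.trans hz)) (sub_pos.mpr hcon),
        mul_nonneg (hNpos z (hrp0.trans hz)).le (sub_nonneg.mpr hEVm)]
    have hψcont : Continuous (fun y : ℝ => 2*E*(y*(y*(y^2+a^2)+2*M*a^2)) - 4*M*a*y) := by fun_prop
    rcases lt_or_ge x z with hxz | hzx
    · obtain ⟨y, hy, hψy⟩ := intermediate_value_Icc' hxz.le hψcont.continuousOn ⟨hψz.le, hψx.le⟩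
      exact hIVT y (hx.trans_le hy.1) hψy
    · have hzx' : z < x := by
        rcases hzx.lt_or_eq with h | h
        · exact h
        · exfalso; rw [h] at hcon; exact lt_irrefl _ hcon
      obtain ⟨y, hy, hψy⟩ := intermediate_value_Icc hzx'.le hψcont.continuousOn ⟨hψz.le, hψx.le⟩
      exact hIVT y (hz.trans_le hy.1) hψy
  · intro y hy hyx hVpyE
    have hstrict := hPzs y hy hyx
    have h0 : E^2*y^4 + (E^2*a^2 - (1+Q))*y^2 + 2*M*(a^2*E^2 - 2*a*E + 1 + Q)*y - Q*a^2 = 0 := by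
      rw [← hVpyE]
      linear_combination hquadp y hy
    linarith

private lemma global_min_aux (M a Q rp : ℝ) (hM : 0 < M) (ha0 : 0 ≤ a) (haM : a < M) (hQ : 0 ≤ Q)
    (hrp0 : 0 < rp) (hDrp : rp^2 - 2*M*rp + a^2 = 0)
    (Vp Vm : ℝ → ℝ)
    (hNpos : ∀ r, 0 < r → 0 < r * (r * (r^2 + a^2) + 2*M*a^2))
    (hgap : ∀ r, rp < r → Vm r < Vp r)
    (hsum : ∀ r, rp < r → (r*(r*(r^2+a^2)+2*M*a^2)) * (Vp r + Vm r) = 4*M*a*r)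
    (hprodm : ∀ r, rp < r → (r*(r*(r^2+a^2)+2*M*a^2)) * (Vp r * Vm r)
      = a^2 - (1+Q)*(r^2-2*M*r+a^2))
    (hquadm : ∀ r, rp < r → (r*(r*(r^2+a^2)+2*M*a^2)) * (Vm r)^2 - 4*M*a*r*(Vm r)
      + (a^2 - (1+Q)*(r^2-2*M*r+a^2)) = 0)
    (x : ℝ) (hx : rp < x)
    (hP'x : 4*(Vm x)^2*x^3 + 2*((Vm x)^2*a^2 - (1+Q))*x
      + 2*M*(a^2*(Vm x)^2 - 2*a*(Vm x) + 1 + Q) = 0) :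
    IsMinOn Vm (Set.Ioi rp) x ∧ (∀ y, rp < y → y ≠ x → Vm y ≠ Vm x) := by
  set E := Vm x with hE
  have hPx : E^2*x^4 + (E^2*a^2 - (1+Q))*x^2 + 2*M*(a^2*E^2 - 2*a*E + 1 + Q)*x - Q*a^2 = 0 := by
    linear_combination hquadm x hx
  have hP'x' : 4*E^2*x^3 + 2*(E^2*a^2 - (1+Q))*x + 2*M*(a^2*E^2 - 2*a*E + 1 + Q) = 0 := by
    linear_combination hP'x
  obtain ⟨hPz, hPzs⟩ := quartic_key M a Q rp x E hM ha0 haM hQ hrp0 hx hDrp hPx hP'x'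
  have hprodid : ∀ z, rp < z → (z*(z*(z^2+a^2)+2*M*a^2)) * ((E - Vp z)*(E - Vm z))
      = E^2*z^4 + (E^2*a^2 - (1+Q))*z^2 + 2*M*(a^2*E^2 - 2*a*E + 1 + Q)*z - Q*a^2 := by
    intro z hz
    linear_combination (-E) * hsum z hz + hprodm z hz
  have hprodnn : ∀ z, rp < z → 0 ≤ (E - Vp z)*(E - Vm z) := by
    intro z hz
    rcases eq_or_ne z x with rfl | hne
    · have h0 : E - Vm z = 0 := sub_eq_zero_of_eq hE
      rw [h0, mul_zero]
    · exact nonneg_of_mul_nonneg_right (by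
        rw [hprodid z hz]; exact hPz z hz) (hNpos z (hrp0.trans hz))
  have hIVT : ∀ y, rp < y → 2*E*(y*(y*(y^2+a^2)+2*M*a^2)) - 4*M*a*y = 0 → False := by
    intro y hyrp hψy
    have hNy := hNpos y (hrp0.trans hyrp)
    have hst : (E - Vp y) + (E - Vm y) = 0 := by
      have hN0 : (y*(y*(y^2+a^2)+2*M*a^2)) * ((E - Vp y) + (E - Vm y)) = 0 := by
        linear_combination hψy - hsum y hyrp
      exact (mul_eq_zero.mp hN0).resolve_left hNy.ne'
    have hs' : E - Vp y = -(E - Vm y) := by linarith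
    have hp := hprodnn y hyrp
    rw [hs'] at hp
    have ht : E - Vm y = 0 := by nlinarith [hp, sq_nonneg (E - Vm y)]
    have := hgap y hyrp
    linarith
  constructor
  · intro z hz
    simp only [Set.mem_Ioi] at hz
    show E ≤ Vm z
    by_contra hcon
    push_neg at hcon
    have hEVp : Vp z ≤ E := by nlinarith [hprodnn z hz]
    have hψx : 2*E*(x*(x*(x^2+a^2)+2*M*a^2)) - 4*M*a*x < 0 := by
      nlinarith [hsum x hx, mul_pos (hNpos x (hrp0.trans hx)) (sub_pos.mpr (hgap x hx))]
    have hψz : 0 < 2*E*(z*(z*(z^2+a^2)+2*M*a^2)) - 4*M*a*z := by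
      nlinarith [hsum z hz, mul_pos (hNpos z (hrp0.trans hz)) (sub_pos.mpr hcon),
        mul_nonneg (hNpos z (hrp0.trans hz)).le (sub_nonneg.mpr hEVp)]
    have hψcont : Continuous (fun y : ℝ => 2*E*(y*(y*(y^2+a^2)+2*M*a^2)) - 4*M*a*y) := by fun_prop
    rcases lt_or_ge x z with hxz | hzx
    · obtain ⟨y, hy, hψy⟩ := intermediate_value_Icc hxz.le hψcont.continuousOn ⟨hψx.le, hψz.le⟩
      exact hIVT y (hx.trans_le hy.1) hψy
    · have hzx' : z < x := by
        rcases hzx.lt_or_eq with h | h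
        · exact h
        · exfalso; rw [h] at hcon; exact lt_irrefl _ hcon
      obtain ⟨y, hy, hψy⟩ := intermediate_value_Icc' hzx'.le hψcont.continuousOn ⟨hψx.le, hψz.le⟩
      exact hIVT y (hz.trans_le hy.1) hψy
  · intro y hy hyx hVmyE
    have hstrict := hPzs y hy hyx
    have h0 : E^2*y^4 + (E^2*a^2 - (1+Q))*y^2 + 2*M*(a^2*E^2 - 2*a*E + 1 + Q)*y - Q*a^2 = 0 := by
      rw [← hVmyE]
      linear_combination hquadm y hy
    linarith

/-- For fixed `𝒬 ≥ 0`, the pseudo potential `V₊(·,𝒬)` has exactly one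
critical point in `(r₊, ∞)`, which is a global maximum there, and `V₋(·,𝒬)`
has exactly one critical point, which is a global minimum there. -/
theorem one_extremum_of_potentials (M a Q : ℝ) (hM : 0 < M)
    (ha0 : 0 ≤ a) (haM : a < M) (hQ : 0 ≤ Q)
    (Δ : ℝ → ℝ) (hΔ : ∀ r, Δ r = r ^ 2 - 2 * M * r + a ^ 2)
    (rp : ℝ) (hrp : rp = M + Real.sqrt (M ^ 2 - a ^ 2))
    (Vp Vm : ℝ → ℝ)
    (hVp : ∀ r, Vp r = (2 * M * a * r +
      Real.sqrt (r * Δ r * ((1 + Q) * r ^ 3 + a ^ 2 * Q * (r + 2 * M)))) /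
      (r * (r * (r ^ 2 + a ^ 2) + 2 * M * a ^ 2)))
    (hVm : ∀ r, Vm r = (2 * M * a * r -
      Real.sqrt (r * Δ r * ((1 + Q) * r ^ 3 + a ^ 2 * Q * (r + 2 * M)))) /
      (r * (r * (r ^ 2 + a ^ 2) + 2 * M * a ^ 2))) :
    (∃! x : ℝ, x ∈ Set.Ioi rp ∧ deriv Vp x = 0) ∧
    (∃! x : ℝ, x ∈ Set.Ioi rp ∧ deriv Vm x = 0) ∧
    (∀ x ∈ Set.Ioi rp, deriv Vp x = 0 → IsMaxOn Vp (Set.Ioi rp) x) ∧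
    (∀ x ∈ Set.Ioi rp, deriv Vm x = 0 → IsMinOn Vm (Set.Ioi rp) x) := by
  -- ### basic facts
  have hMa2 : 0 < M^2 - a^2 := by nlinarith
  have hκ : 0 < Real.sqrt (M^2 - a^2) := Real.sqrt_pos.mpr hMa2
  have hκ2 : (Real.sqrt (M^2 - a^2))^2 = M^2 - a^2 := Real.sq_sqrt hMa2.le
  set κ := Real.sqrt (M^2 - a^2) with hκdef
  have hrpM : rp = M + κ := by rw [hrp]
  have hrp0 : 0 < rp := by rw [hrpM]; linarith
  have hDrp : rp^2 - 2*M*rp + a^2 = 0 := by rw [hrpM]; linear_combination hκ2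
  have hDpos : ∀ r, rp < r → 0 < r^2 - 2*M*r+a^2 := by
    intro r hr
    rw [hrpM] at hr
    nlinarith [mul_pos (show (0:ℝ) < r - M - κ by linarith) (show (0:ℝ) < r - M + κ by linarith)]
  have hWpos : ∀ r, 0 < r → 0 < (1+Q)*r^3 + a^2*Q*(r+2*M) := by
    intro r hr
    have h1 : 0 < r^3 := by positivity
    nlinarith [mul_nonneg (mul_nonneg (sq_nonneg a) hQ) (show (0:ℝ) ≤ r + 2*M by linarith)]
  have hWge : ∀ r, 0 < r → r^3 ≤ (1+Q)*r^3 + a^2*Q*(r+2*M) := by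
    intro r hr
    nlinarith [mul_nonneg (mul_nonneg (sq_nonneg a) hQ) (show (0:ℝ) ≤ r + 2*M by linarith),
      mul_nonneg hQ (pow_nonneg hr.le 3)]
  have hSpos : ∀ r, rp < r → 0 < r * (r^2 - 2*M*r + a^2) * ((1+Q)*r^3 + a^2*Q*(r+2*M)) := by
    intro r hr
    exact mul_pos (mul_pos (hrp0.trans hr) (hDpos r hr)) (hWpos r (hrp0.trans hr))
  have hNpos : ∀ r, 0 < r → 0 < r * (r * (r^2 + a^2) + 2*M*a^2) := by
    intro r hr
    have : 0 < r * (r^2 + a^2) + 2*M*a^2 := by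
      nlinarith [mul_pos hr (mul_pos hr hr), mul_nonneg hr.le (sq_nonneg a),
        mul_nonneg hM.le (sq_nonneg a)]
    exact mul_pos hr this
  -- ### quadratic identities
  have hu2 : ∀ r, rp < r →
      (Real.sqrt (r * (r^2-2*M*r+a^2) * ((1+Q)*r^3 + a^2*Q*(r+2*M))))^2
      = (2*M*a*r)^2 - (r*(r*(r^2+a^2)+2*M*a^2)) * (a^2 - (1+Q)*(r^2-2*M*r+a^2)) := by
    intro r hr
    rw [Real.sq_sqrt (hSpos r hr).le]; ring
  have hquadp : ∀ r, rp < r →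
      (r*(r*(r^2+a^2)+2*M*a^2)) * (Vp r)^2 - 4*M*a*r*(Vp r)
        + (a^2 - (1+Q)*(r^2-2*M*r+a^2)) = 0 := by
    intro r hr
    have h := quad_of_sqrt (r*(r*(r^2+a^2)+2*M*a^2)) (2*M*a*r)
      (a^2 - (1+Q)*(r^2-2*M*r+a^2))
      (Real.sqrt (r * (r^2-2*M*r+a^2) * ((1+Q)*r^3 + a^2*Q*(r+2*M))))
      (hNpos r (hrp0.trans hr)).ne' (hu2 r hr)
    rw [hVp r, hΔ r]
    linear_combination h
  have hquadm : ∀ r, rp < r →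
      (r*(r*(r^2+a^2)+2*M*a^2)) * (Vm r)^2 - 4*M*a*r*(Vm r)
        + (a^2 - (1+Q)*(r^2-2*M*r+a^2)) = 0 := by
    intro r hr
    have h := quad_of_sqrt' (r*(r*(r^2+a^2)+2*M*a^2)) (2*M*a*r)
      (a^2 - (1+Q)*(r^2-2*M*r+a^2))
      (Real.sqrt (r * (r^2-2*M*r+a^2) * ((1+Q)*r^3 + a^2*Q*(r+2*M))))
      (hNpos r (hrp0.trans hr)).ne' (hu2 r hr)
    rw [hVm r, hΔ r]
    linear_combination h
  have hsum : ∀ r, rp < r → (r*(r*(r^2+a^2)+2*M*a^2)) * (Vp r + Vm r) = 4*M*a*r := by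
    intro r hr
    have h := sum_of_sqrt (r*(r*(r^2+a^2)+2*M*a^2)) (2*M*a*r)
      (Real.sqrt (r * (r^2-2*M*r+a^2) * ((1+Q)*r^3 + a^2*Q*(r+2*M))))
      (hNpos r (hrp0.trans hr)).ne'
    rw [hVp r, hVm r, hΔ r]
    linear_combination h
  have hprodm : ∀ r, rp < r → (r*(r*(r^2+a^2)+2*M*a^2)) * (Vp r * Vm r)
      = a^2 - (1+Q)*(r^2-2*M*r+a^2) := by
    intro r hr
    have h := prod_of_sqrt (r*(r*(r^2+a^2)+2*M*a^2)) (2*M*a*r)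
      (a^2 - (1+Q)*(r^2-2*M*r+a^2))
      (Real.sqrt (r * (r^2-2*M*r+a^2) * ((1+Q)*r^3 + a^2*Q*(r+2*M))))
      (hNpos r (hrp0.trans hr)).ne' (hu2 r hr)
    rw [hVp r, hVm r, hΔ r]
    linear_combination h
  have hgap : ∀ r, rp < r → Vm r < Vp r := by
    intro r hr
    rw [hVp r, hVm r, hΔ r]
    have hN := hNpos r (hrp0.trans hr)
    have hup : 0 < Real.sqrt (r * (r^2-2*M*r+a^2) * ((1+Q)*r^3 + a^2*Q*(r+2*M))) :=
      Real.sqrt_pos.mpr (hSpos r hr)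
    exact (div_lt_div_iff_of_pos_right hN).mpr (by linarith)
  -- ### differentiability and derivative transfer
  have hVpfun : Vp = fun r => (2*M*a*r +
      Real.sqrt (r*(r^2-2*M*r+a^2)*((1+Q)*r^3+a^2*Q*(r+2*M)))) / (r*(r*(r^2+a^2)+2*M*a^2)) := by
    funext r; rw [hVp r, hΔ r]
  have hVmfun : Vm = fun r => (2*M*a*r -
      Real.sqrt (r*(r^2-2*M*r+a^2)*((1+Q)*r^3+a^2*Q*(r+2*M)))) / (r*(r*(r^2+a^2)+2*M*a^2)) := by
    funext r; rw [hVm r, hΔ r]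
  have hdiffp : ∀ x, rp < x → DifferentiableAt ℝ Vp x := by
    intro x hx
    have hx0 : 0 < x := hrp0.trans hx
    rw [hVpfun]
    apply DifferentiableAt.div
    · exact (by fun_prop : DifferentiableAt ℝ (fun r : ℝ => 2*M*a*r) x).add
        ((by fun_prop : DifferentiableAt ℝ
          (fun r : ℝ => r*(r^2-2*M*r+a^2)*((1+Q)*r^3+a^2*Q*(r+2*M))) x).sqrt (hSpos x hx).ne')
    · fun_prop
    · exact (hNpos x hx0).ne'
  have hdiffm : ∀ x, rp < x → DifferentiableAt ℝ Vm x := by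
    intro x hx
    have hx0 : 0 < x := hrp0.trans hx
    rw [hVmfun]
    apply DifferentiableAt.div
    · exact (by fun_prop : DifferentiableAt ℝ (fun r : ℝ => 2*M*a*r) x).sub
        ((by fun_prop : DifferentiableAt ℝ
          (fun r : ℝ => r*(r^2-2*M*r+a^2)*((1+Q)*r^3+a^2*Q*(r+2*M))) x).sqrt (hSpos x hx).ne')
    · fun_prop
    · exact (hNpos x hx0).ne'
  have hcrit : ∀ (V : ℝ → ℝ), (∀ x, rp < x → DifferentiableAt ℝ V x) →
      (∀ r, rp < r → (r*(r*(r^2+a^2)+2*M*a^2)) * (V r)^2 - 4*M*a*r*(V r)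
        + (a^2 - (1+Q)*(r^2-2*M*r+a^2)) = 0) →
      ∀ x, rp < x → deriv V x = 0 →
      4*(V x)^2*x^3 + 2*((V x)^2*a^2 - (1+Q))*x
        + 2*M*(a^2*(V x)^2 - 2*a*(V x) + 1 + Q) = 0 := by
    intro V hdiff hquad x hx hdx
    have hdV : HasDerivAt V 0 x := by
      have h := (hdiff x hx).hasDerivAt
      rwa [hdx] at h
    have hN' : HasDerivAt (fun r : ℝ => r*(r*(r^2+a^2)+2*M*a^2)) (4*x^3 + 2*a^2*x + 2*M*a^2) x := by
      have hcombo := ((hasDerivAt_pow 4 x).add (((hasDerivAt_pow 2 x).const_mul (a^2)).add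
          (((hasDerivAt_id' x)).const_mul (2*M*a^2))))
      exact hasDerivAt_congr_fun hcombo (fun r => by simp only [Pi.add_apply]; ring) _ (by push_cast; ring)
    have hlin : HasDerivAt (fun r : ℝ => 4*M*a*r) (4*M*a) x :=
      hasDerivAt_congr_fun ((hasDerivAt_id' x).const_mul (4*M*a)) (fun r => by ring) _ (by ring)
    have hconst : HasDerivAt (fun r : ℝ => a^2 - (1+Q)*(r^2-2*M*r+a^2)) (-((1+Q)*(2*x-2*M))) x := by
      have h1 : HasDerivAt (fun r : ℝ => r^2-2*M*r+a^2) (2*x - 2*M) x := by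
        have hcombo := (((hasDerivAt_pow 2 x).sub
          ((hasDerivAt_id' x).const_mul (2*M))).add_const (a^2))
        exact hasDerivAt_congr_fun hcombo (fun r => by simp only [Pi.sub_apply]) _ (by push_cast; ring)
      exact hasDerivAt_congr_fun ((h1.const_mul (1+Q)).const_sub (a^2)) (fun r => by ring) _ (by ring)
    have hΦ : HasDerivAt (fun r : ℝ => (r*(r*(r^2+a^2)+2*M*a^2)) * (V r)^2 - 4*M*a*r*(V r)
        + (a^2 - (1+Q)*(r^2-2*M*r+a^2)))
        ((4*x^3 + 2*a^2*x + 2*M*a^2)*(V x)^2 - 4*M*a*(V x) - (1+Q)*(2*x-2*M)) x := by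
      refine hasDerivAt_congr_fun (((hN'.mul (hdV.pow 2)).sub (hlin.mul hdV)).add hconst)
        (fun r => rfl) _ (by simp only [Pi.pow_apply]; ring)
    have hev : (fun r : ℝ => (r*(r*(r^2+a^2)+2*M*a^2)) * (V r)^2 - 4*M*a*r*(V r)
        + (a^2 - (1+Q)*(r^2-2*M*r+a^2))) =ᶠ[nhds x] (fun _ => (0:ℝ)) := by
      filter_upwards [Ioi_mem_nhds hx] with r hr using hquad r hr
    have h0 : deriv (fun r : ℝ => (r*(r*(r^2+a^2)+2*M*a^2)) * (V r)^2 - 4*M*a*r*(V r)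
        + (a^2 - (1+Q)*(r^2-2*M*r+a^2))) x = 0 := by
      rw [hev.deriv_eq]; exact deriv_const x 0
    have hval0 : (4*x^3 + 2*a^2*x + 2*M*a^2)*(V x)^2 - 4*M*a*(V x) - (1+Q)*(2*x-2*M) = 0 :=
      hΦ.deriv.symm.trans h0
    linear_combination hval0
  -- ### the max/min statements
  have hmaxall : ∀ x ∈ Set.Ioi rp, deriv Vp x = 0 →
      IsMaxOn Vp (Set.Ioi rp) x ∧ (∀ y, rp < y → y ≠ x → Vp y ≠ Vp x) := by
    intro x hx hdx
    exact global_max_aux M a Q rp hM ha0 haM hQ hrp0 hDrp Vp Vm hNpos hgap hsum hprodm hquadp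
      x hx (hcrit Vp hdiffp hquadp x hx hdx)
  have hminall : ∀ x ∈ Set.Ioi rp, deriv Vm x = 0 →
      IsMinOn Vm (Set.Ioi rp) x ∧ (∀ y, rp < y → y ≠ x → Vm y ≠ Vm x) := by
    intro x hx hdx
    exact global_min_aux M a Q rp hM ha0 haM hQ hrp0 hDrp Vp Vm hNpos hgap hsum hprodm hquadm
      x hx (hcrit Vm hdiffm hquadm x hx hdx)
  -- ### values at rp
  have hVprp : Vp rp = 2*M*a*rp / (rp*(rp*(rp^2+a^2)+2*M*a^2)) := by
    rw [hVp rp, hΔ rp, hDrp, mul_zero, zero_mul, Real.sqrt_zero, add_zero]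
  have hVmrp : Vm rp = 2*M*a*rp / (rp*(rp*(rp^2+a^2)+2*M*a^2)) := by
    rw [hVm rp, hΔ rp, hDrp, mul_zero, zero_mul, Real.sqrt_zero, sub_zero]
  have hVppos : ∀ r, rp < r → 0 < Vp r := by
    intro r hr
    rw [hVp r, hΔ r]
    apply div_pos ?_ (hNpos r (hrp0.trans hr))
    have hup : 0 < Real.sqrt (r * (r^2-2*M*r+a^2) * ((1+Q)*r^3 + a^2*Q*(r+2*M))) :=
      Real.sqrt_pos.mpr (hSpos r hr)
    nlinarith [mul_nonneg (mul_nonneg (mul_nonneg (by norm_num : (0:ℝ) ≤ 2) hM.le) ha0)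
      (hrp0.trans hr).le]
  -- ### existence for Vp : a point r1 near rp with Vp rp < Vp r1
  obtain ⟨r1, hr1, hr1u, hVpr1⟩ : ∃ r1, rp < r1 ∧ r1 ≤ rp + 1 ∧ Vp rp < Vp r1 := by
    set C0 : ℝ := 2*M*a*(rp+1)*rp*((rp+1)^2+(rp+1)*rp+rp^2+a^2) + 1 with hC0def
    have h2Ma : 0 ≤ 2*M*a := mul_nonneg (by linarith) ha0
    have hC0nn : 0 ≤ C0 - 1 := by
      rw [hC0def]
      have : 0 ≤ 2*M*a*(rp+1)*rp := mul_nonneg (mul_nonneg h2Ma (by linarith)) hrp0.le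
      nlinarith [sq_nonneg (rp+1), sq_nonneg a, mul_pos hrp0 hrp0, mul_pos (show (0:ℝ) < rp+1 by linarith) hrp0]
    have hC0pos : 0 < C0 := by linarith
    set NP : ℝ := rp*(rp*(rp^2+a^2)+2*M*a^2) with hNPdef
    have hNPpos : 0 < NP := hNpos rp hrp0
    set D0 : ℝ := NP^2 * (2*κ*rp^4) with hD0def
    have hD0pos : 0 < D0 := by
      apply mul_pos (pow_pos hNPpos 2)
      positivity
    obtain ⟨δ, hδpos, hδ1, hδ2⟩ : ∃ δ : ℝ, 0 < δ ∧ δ ≤ 1 ∧ C0^2 * δ < D0 := by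
      refine ⟨min 1 (D0/(2*C0^2)), lt_min one_pos (div_pos hD0pos (by positivity)),
        min_le_left _ _, ?_⟩
      have h := min_le_right 1 (D0/(2*C0^2))
      have h2 : C0^2*(min 1 (D0/(2*C0^2))) ≤ C0^2*(D0/(2*C0^2)) :=
        mul_le_mul_of_nonneg_left h (by positivity)
      have h3 : C0^2*(D0/(2*C0^2)) = D0/2 := by field_simp
      rw [h3] at h2
      linarith
    refine ⟨rp + δ, by linarith, by linarith, ?_⟩
    set r1 := rp + δ with hr1def
    have hr1 : rp < r1 := by rw [hr1def]; linarith
    have hr10 : 0 < r1 := hrp0.trans hr1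
    -- lower bound on S r1
    have hΔ1 : r1^2 - 2*M*r1 + a^2 = δ^2 + 2*κ*δ := by
      rw [hr1def]; linear_combination hDrp + 2*δ*hrpM
    have hSr1 : 2*κ*rp^4*δ ≤ r1*(r1^2-2*M*r1+a^2)*((1+Q)*r1^3+a^2*Q*(r1+2*M)) := by
      have hW1 : rp^3 ≤ (1+Q)*r1^3+a^2*Q*(r1+2*M) := by
        have := hWge r1 hr10
        nlinarith [pow_le_pow_left₀ hrp0.le hr1.le 3]
      have hΔ1' : 2*κ*δ ≤ r1^2-2*M*r1+a^2 := by rw [hΔ1]; nlinarith [sq_nonneg δ]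
      have hstep : rp*(2*κ*δ) ≤ r1*(r1^2-2*M*r1+a^2) :=
        mul_le_mul hr1.le hΔ1' (by positivity) hr10.le
      calc 2*κ*rp^4*δ = rp*(2*κ*δ)*rp^3 := by ring
      _ ≤ (r1*(r1^2-2*M*r1+a^2))*((1+Q)*r1^3+a^2*Q*(r1+2*M)) :=
        mul_le_mul hstep hW1 (by positivity) (mul_nonneg hr10.le (((mul_pos (mul_pos two_pos hκ) hδpos).le).trans hΔ1'))
      _ = r1*(r1^2-2*M*r1+a^2)*((1+Q)*r1^3+a^2*Q*(r1+2*M)) := by ring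
    -- the key inequality
    have hv2 : (Real.sqrt (2*κ*rp^4*δ))^2 = 2*κ*rp^4*δ := Real.sq_sqrt (by positivity)
    have hvle : Real.sqrt (2*κ*rp^4*δ) ≤
        Real.sqrt (r1*(r1^2-2*M*r1+a^2)*((1+Q)*r1^3+a^2*Q*(r1+2*M))) :=
      Real.sqrt_le_sqrt hSr1
    have hClt : C0*δ < NP * Real.sqrt (2*κ*rp^4*δ) := by
      have hpos2 : 0 ≤ NP * Real.sqrt (2*κ*rp^4*δ) := by positivity
      refine lt_of_pow_lt_pow_left₀ 2 hpos2 ?_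
      rw [mul_pow NP (Real.sqrt (2*κ*rp^4*δ)), hv2]
      have : NP^2*(2*κ*rp^4*δ) = D0*δ := by rw [hD0def]; ring
      rw [this]
      nlinarith [hδ2, hδpos]
    have hG : r1^2+r1*rp+rp^2+a^2 ≤ (rp+1)^2+(rp+1)*rp+rp^2+a^2 := by
      nlinarith [mul_nonneg (show (0:ℝ) ≤ rp+1-r1 by rw [hr1def]; linarith)
        (show (0:ℝ) ≤ rp+1+r1 by linarith)]
    have hcoef : 2*M*a*r1*rp*(r1^2+r1*rp+rp^2+a^2) ≤ C0 := by
      have h1 : 2*M*a*r1*rp ≤ 2*M*a*(rp+1)*rp := by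
        have := mul_le_mul_of_nonneg_left (show r1 ≤ rp+1 by rw [hr1def]; linarith)
          (mul_nonneg h2Ma hrp0.le)
        nlinarith
      have h2 : 2*M*a*r1*rp*(r1^2+r1*rp+rp^2+a^2)
          ≤ 2*M*a*(rp+1)*rp*((rp+1)^2+(rp+1)*rp+rp^2+a^2) := by
        apply mul_le_mul h1 hG (by positivity) (mul_nonneg (mul_nonneg h2Ma (by linarith)) hrp0.le)
      rw [hC0def]; linarith
    have hstep' : 2*M*a*r1*rp*(r1^2+r1*rp+rp^2+a^2)*(r1-rp) ≤ C0*δ := by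
      have hδeq : r1 - rp = δ := by rw [hr1def]; ring
      rw [hδeq]
      exact mul_le_mul_of_nonneg_right hcoef hδpos.le
    have hlast : NP * Real.sqrt (2*κ*rp^4*δ) ≤
        NP * Real.sqrt (r1*(r1^2-2*M*r1+a^2)*((1+Q)*r1^3+a^2*Q*(r1+2*M))) :=
      mul_le_mul_of_nonneg_left hvle hNPpos.le
    -- conclude
    rw [hVprp, hVp r1, hΔ r1]
    rw [div_lt_div_iff₀ hNPpos (hNpos r1 hr10)]
    rw [hNPdef] at hClt hlast ⊢
    nlinarith [hstep', hClt, hlast]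
  -- ### tail bound utility
  set C1 : ℝ := 1 + Q + 2*a^2*Q with hC1def
  have hC1nn : 0 ≤ C1 := by
    rw [hC1def]; nlinarith [mul_nonneg (sq_nonneg a) hQ]
  have hsqrtC1 : (Real.sqrt C1)^2 = C1 := Real.sq_sqrt hC1nn
  have htail : ∀ ε : ℝ, 0 < ε → ∀ R, 2*M+1 ≤ R → 1 ≤ R → (2*M*a+Real.sqrt C1+1)/ε ≤ R →
      rp < R ∧ Real.sqrt (R*(R^2-2*M*R+a^2)*((1+Q)*R^3+a^2*Q*(R+2*M)))
        < ε * (R*(R*(R^2+a^2)+2*M*a^2)) - 2*M*a*R := by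
    intro ε hε R hR2M hR1 hRε
    have hRpos : 0 < R := by linarith
    have hRrp : rp < R := by
      rw [hrpM]
      have : κ ≤ M := by
        nlinarith [hκ2, hκ, sq_nonneg (κ - M)]
      linarith
    have hεR : 2*M*a+Real.sqrt C1+1 ≤ ε*R := by
      rw [div_le_iff₀ hε] at hRε
      nlinarith [hRε]
    have hNR : R^4 ≤ R*(R*(R^2+a^2)+2*M*a^2) := by
      nlinarith [mul_nonneg (sq_nonneg a) (sq_nonneg R), mul_nonneg (mul_nonneg hM.le (sq_nonneg a)) hRpos.le]
    have hR3 : R ≤ R^3 := by nlinarith [hR1, hRpos]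
    have h2Ma : 0 ≤ 2*M*a := mul_nonneg (by linarith) ha0
    have ht : (Real.sqrt C1+1)*R^3 ≤ ε*(R*(R*(R^2+a^2)+2*M*a^2)) - 2*M*a*R := by
      have h1 : (2*M*a+Real.sqrt C1+1)*R^3 ≤ (ε*R)*R^3 :=
        mul_le_mul_of_nonneg_right hεR (by positivity)
      have h2 : ε*R^4 ≤ ε*(R*(R*(R^2+a^2)+2*M*a^2)) := mul_le_mul_of_nonneg_left hNR hε.le
      have h3 : 2*M*a*R ≤ 2*M*a*R^3 := mul_le_mul_of_nonneg_left hR3 h2Ma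
      nlinarith [h1, h2, h3]
    have htpos : 0 < ε*(R*(R*(R^2+a^2)+2*M*a^2)) - 2*M*a*R := by
      have : 0 < (Real.sqrt C1+1)*R^3 := by positivity
      linarith
    have hSR : R*(R^2-2*M*R+a^2)*((1+Q)*R^3+a^2*Q*(R+2*M)) ≤ C1*R^6 := by
      have hΔle : R^2-2*M*R+a^2 ≤ R^2 := by nlinarith
      have hΔnn : 0 ≤ R^2-2*M*R+a^2 := (hDpos R hRrp).le
      have hWle : (1+Q)*R^3+a^2*Q*(R+2*M) ≤ C1*R^3 := by
        rw [hC1def]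
        have : R+2*M ≤ 2*R^3 := by nlinarith
        nlinarith [mul_nonneg (sq_nonneg a) hQ]
      have hWnn : 0 ≤ (1+Q)*R^3+a^2*Q*(R+2*M) := (hWpos R hRpos).le
      have hs1 : R*(R^2-2*M*R+a^2) ≤ R*R^2 := mul_le_mul_of_nonneg_left hΔle hRpos.le
      calc R*(R^2-2*M*R+a^2)*((1+Q)*R^3+a^2*Q*(R+2*M)) ≤ (R*R^2)*(C1*R^3) := by
            apply mul_le_mul hs1 hWle hWnn (by positivity)
      _ = C1*R^6 := by ring
    refine ⟨hRrp, ?_⟩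
    rw [Real.sqrt_lt' htpos]
    have hsq : ((Real.sqrt C1+1)*R^3)^2 ≤ (ε*(R*(R*(R^2+a^2)+2*M*a^2)) - 2*M*a*R)^2 := by
      apply pow_le_pow_left₀ (by positivity) ht
    have hexp : ((Real.sqrt C1+1)*R^3)^2 = C1*R^6 + (2*Real.sqrt C1+1)*R^6 := by
      linear_combination R^6 * hsqrtC1
    nlinarith [hsq, hexp, hSR, Real.sqrt_nonneg C1, pow_pos hRpos 6]
  -- ### existence of the critical point of Vp
  have hexVp : ∃ x, x ∈ Set.Ioi rp ∧ deriv Vp x = 0 := by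
    have hε := hVppos r1 hr1
    set ε := Vp r1 with hεdef
    set R : ℝ := max (r1+1) (max (2*M+1) (max 1 ((2*M*a+Real.sqrt C1+1)/ε))) with hRdef
    have hRr1 : r1 + 1 ≤ R := le_max_left _ _
    have hR2M : 2*M+1 ≤ R := le_trans (le_max_left _ _) (le_max_right _ _)
    have hR1 : 1 ≤ R := le_trans (le_max_left _ _) (le_trans (le_max_right _ _) (le_max_right _ _))
    have hRε : (2*M*a+Real.sqrt C1+1)/ε ≤ R :=
      le_trans (le_max_right _ _) (le_trans (le_max_right _ _) (le_max_right _ _))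
    obtain ⟨hRrp, hsqrtR⟩ := htail ε hε R hR2M hR1 hRε
    have hVpR : Vp R < ε := by
      rw [hVp R, hΔ R, div_lt_iff₀ (hNpos R (hrp0.trans hRrp))]
      linarith [hsqrtR]
    have hrpR : rp ≤ R := hRrp.le
    have hcontp : ContinuousOn Vp (Set.Icc rp R) := by
      have hc : ContinuousOn (fun r => (2*M*a*r +
          Real.sqrt (r*(r^2-2*M*r+a^2)*((1+Q)*r^3+a^2*Q*(r+2*M)))) /
          (r*(r*(r^2+a^2)+2*M*a^2))) (Set.Icc rp R) := by
        apply ContinuousOn.div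
        · fun_prop
        · fun_prop
        · intro r hr; exact (hNpos r (lt_of_lt_of_le hrp0 hr.1)).ne'
      exact hc.congr (fun r hr => by rw [hVp r, hΔ r])
    obtain ⟨w, hw, hwmax⟩ := isCompact_Icc.exists_isMaxOn (Set.nonempty_Icc.mpr hrpR) hcontp
    have hr1mem : r1 ∈ Set.Icc rp R := ⟨hr1.le, by linarith⟩
    have hVw : Vp r1 ≤ Vp w := hwmax hr1mem
    have hwrp : rp < w := by
      rcases hw.1.lt_or_eq with h | h
      · exact h
      · exfalso; rw [← h] at hVw; linarith
    have hwR : w < R := by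
      rcases hw.2.lt_or_eq with h | h
      · exact h
      · exfalso; rw [h] at hVw; linarith
    have hloc : IsLocalMax Vp w := hwmax.isLocalMax (Icc_mem_nhds hwrp hwR)
    exact ⟨w, hwrp, hloc.deriv_eq_zero⟩
  -- ### existence for Vm : value below the horizon value and below 0
  have hVmrp_nn : 0 ≤ Vm rp := by
    rw [hVmrp]
    apply div_nonneg ?_ (hNpos rp hrp0).le
    nlinarith [mul_nonneg (mul_nonneg hM.le ha0) hrp0.le]
  obtain ⟨r2, hr2, hVmr2neg, hVmr2⟩ : ∃ r2, rp < r2 ∧ Vm r2 < 0 ∧ Vm r2 < Vm rp := by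
    set r2 := rp + 4*M with hr2def
    have hr2 : rp < r2 := by rw [hr2def]; linarith
    have hr20 : 0 < r2 := hrp0.trans hr2
    have hΔ2 : r2^2 - 2*M*r2 + a^2 = 8*M*rp + 8*M^2 := by
      rw [hr2def]; linear_combination hDrp
    have hrpgeM : M ≤ rp := by rw [hrpM]; linarith
    have hneg : Vm r2 < 0 := by
      rw [hVm r2, hΔ r2]
      apply div_neg_of_neg_of_pos ?_ (hNpos r2 hr20)
      have hlt : 2*M*a*r2 < Real.sqrt (r2*(r2^2-2*M*r2+a^2)*((1+Q)*r2^3+a^2*Q*(r2+2*M))) := by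
        rw [show (2:ℝ)*M*a*r2 = 2*M*a*r2 from rfl]
        have h2Mar2 : 0 ≤ 2*M*a*r2 := by positivity
        rw [← Real.sqrt_sq h2Mar2]
        apply Real.sqrt_lt_sqrt (sq_nonneg _)
        have hW2 : r2^3 ≤ (1+Q)*r2^3+a^2*Q*(r2+2*M) := hWge r2 hr20
        have hΔ2' : 16*M^2 ≤ r2^2-2*M*r2+a^2 := by rw [hΔ2]; nlinarith
        have hr2M : 4*M < r2 := by rw [hr2def]; linarith
        have ha2 : a^2 < r2^2 := by
          nlinarith [mul_pos (show (0:ℝ) < r2 - a by linarith) (show (0:ℝ) < r2 + a by linarith)]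
        have hstep : (2*M*a*r2)^2 < 16*M^2*r2^2*r2^2 := by
          have h4 : 0 < 4*r2^2 - a^2 := by nlinarith
          nlinarith [mul_pos (show (0:ℝ) < M^2*r2^2 by positivity) h4]
        have hchain : 16*M^2*r2^2*r2^2 ≤ r2*(r2^2-2*M*r2+a^2)*r2^3 := by nlinarith [hΔ2', pow_pos hr20 3, sq_nonneg r2]
        have hchain2 : r2*(r2^2-2*M*r2+a^2)*r2^3 ≤ r2*(r2^2-2*M*r2+a^2)*((1+Q)*r2^3+a^2*Q*(r2+2*M)) := by
          apply mul_le_mul_of_nonneg_left hW2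
          exact mul_nonneg hr20.le (by nlinarith)
        calc (2*M*a*r2)^2 < 16*M^2*r2^2*r2^2 := hstep
        _ ≤ r2*(r2^2-2*M*r2+a^2)*r2^3 := hchain
        _ ≤ _ := hchain2
      linarith
    exact ⟨r2, hr2, hneg, by linarith⟩
  have hexVm : ∃ x, x ∈ Set.Ioi rp ∧ deriv Vm x = 0 := by
    set ε := -Vm r2 with hεdef
    have hε : 0 < ε := by rw [hεdef]; linarith
    set R : ℝ := max (r2+1) (max (2*M+1) (max 1 ((2*M*a+Real.sqrt C1+1)/ε))) with hRdef
    have hRr2 : r2 + 1 ≤ R := le_max_left _ _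
    have hR2M : 2*M+1 ≤ R := le_trans (le_max_left _ _) (le_max_right _ _)
    have hR1 : 1 ≤ R := le_trans (le_max_left _ _) (le_trans (le_max_right _ _) (le_max_right _ _))
    have hRε : (2*M*a+Real.sqrt C1+1)/ε ≤ R :=
      le_trans (le_max_right _ _) (le_trans (le_max_right _ _) (le_max_right _ _))
    obtain ⟨hRrp, hsqrtR⟩ := htail ε hε R hR2M hR1 hRε
    have hVmR : Vm r2 < Vm R := by
      rw [hVm R, hΔ R, lt_div_iff₀ (hNpos R (hrp0.trans hRrp))]
      have h2MaR : 0 ≤ 2*M*a*R := by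
        have : (0:ℝ) < R := by linarith
        positivity
      have hbridge : ε * (R*(R*(R^2+a^2)+2*M*a^2)) = -(Vm r2 * (R*(R*(R^2+a^2)+2*M*a^2))) := by
        rw [hεdef]; ring
      nlinarith [hsqrtR, h2MaR, hbridge]
    have hrpR : rp ≤ R := hRrp.le
    have hcontm : ContinuousOn Vm (Set.Icc rp R) := by
      have hc : ContinuousOn (fun r => (2*M*a*r -
          Real.sqrt (r*(r^2-2*M*r+a^2)*((1+Q)*r^3+a^2*Q*(r+2*M)))) /
          (r*(r*(r^2+a^2)+2*M*a^2))) (Set.Icc rp R) := by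
        apply ContinuousOn.div
        · fun_prop
        · fun_prop
        · intro r hr; exact (hNpos r (lt_of_lt_of_le hrp0 hr.1)).ne'
      exact hc.congr (fun r hr => by rw [hVm r, hΔ r])
    obtain ⟨w, hw, hwmin⟩ := isCompact_Icc.exists_isMinOn (Set.nonempty_Icc.mpr hrpR) hcontm
    have hr2mem : r2 ∈ Set.Icc rp R := ⟨hr2.le, by linarith⟩
    have hVw : Vm w ≤ Vm r2 := hwmin hr2mem
    have hwrp : rp < w := by
      rcases hw.1.lt_or_eq with h | h
      · exact h
      · exfalso; rw [← h] at hVw; linarith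
    have hwR : w < R := by
      rcases hw.2.lt_or_eq with h | h
      · exact h
      · exfalso; rw [h] at hVw; linarith
    have hloc : IsLocalMin Vm w := hwmin.isLocalMin (Icc_mem_nhds hwrp hwR)
    exact ⟨w, hwrp, hloc.deriv_eq_zero⟩
  -- ### assemble
  obtain ⟨xp, hxp, hdxp⟩ := hexVp
  obtain ⟨xm, hxm, hdxm⟩ := hexVm
  refine ⟨⟨xp, ⟨hxp, hdxp⟩, ?_⟩, ⟨xm, ⟨hxm, hdxm⟩, ?_⟩,
    fun x hx hdx => (hmaxall x hx hdx).1, fun x hx hdx => (hminall x hx hdx).1⟩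
  · rintro y ⟨hy, hdy⟩
    by_contra hne
    have h1 := hmaxall xp hxp hdxp
    have h2 := hmaxall y hy hdy
    have hval : Vp y = Vp xp := le_antisymm (h1.1 hy) (h2.1 hxp)
    exact h1.2 y hy hne hval
  · rintro y ⟨hy, hdy⟩
    by_contra hne
    have h1 := hminall xm hxm hdxm
    have h2 := hminall y hy hdy
    have hval : Vm y = Vm xm := le_antisymm (h2.1 hxm) (h1.1 hy)
    exact h1.2 y hy hne hval
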